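/- For every ε > 0 and every C > 1/ε, if g₁ : [t₁,∞) → [0,∞) is a recursive antiderivative of a continuous f₁ with x·g₁(x) → 1/2 as x → ∞, then g(x) = g₁(x) + C/x^{1+ε} satisfies -g'(x) ≥ g(x)² + f₁(x) + 1/x^{2+ε} for all sufficiently large x; consequently f₁ + x^{-(2+ε)} is recursively integrable. -/

import Mathlib

open Set Filter Real Topology

private lemma hdw_singleton (f : ℝ → ℝ) (f' x : ℝ) : HasDerivWithinAt f f' {x} x := by
  simp only [HasDerivWithinAt, HasFDerivWithinAt, nhdsWithin_singleton,
    HasDerivAtFilter, hasFDerivAtFilter_iff_isLittleO, Asymptotics.isLittleO_pure]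
  simp

private lemma hasDerivAt_const_div_rpow (c p : ℝ) {x : ℝ} (hx : 0 < x) :
    HasDerivAt (fun y : ℝ => c / y ^ p) (-(c * p / x ^ (p + 1))) x := by
  have hne : x ^ p ≠ 0 := (Real.rpow_pos_of_pos hx p).ne'
  have h1 : HasDerivAt (fun y : ℝ => y ^ p) (p * x ^ (p - 1)) x :=
    Real.hasDerivAt_rpow_const (Or.inl hx.ne')
  have h2 : HasDerivAt (fun y : ℝ => c / y ^ p) ((0 * x ^ p - c * (p * x ^ (p - 1))) / (x ^ p) ^ 2) x :=
    (hasDerivAt_const x c).div h1 hne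
  convert h2 using 1
  have e1 : (x ^ p) ^ 2 = x ^ (p + 1) * x ^ (p - 1) := by
    rw [sq, ← Real.rpow_add hx, ← Real.rpow_add hx]; ring_nf
  have h3 : x ^ (p - 1) ≠ 0 := (Real.rpow_pos_of_pos hx _).ne'
  have h4 : x ^ (p + 1) ≠ 0 := (Real.rpow_pos_of_pos hx _).ne'
  rw [e1]
  field_simp
  ring

private lemma key_alg {C ε G q x u : ℝ} (hx : 0 < x) (hu : 0 < u)
    (key : 2*C*(x*G) + C^2/u + 1 < C*(1+ε)) :
    (G + C/(x*u))^2 + q + 1/(x^2*u) < G^2 + q + C*(1+ε)/(x^2*u) := by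
  have hP : (0:ℝ) < x^2*u := by positivity
  have e : (G + C/(x*u))^2 + q + 1/(x^2*u)
      = G^2 + q + (2*C*(x*G) + C^2/u + 1)/(x^2*u) := by
    field_simp
    ring
  rw [e]
  have h2 := (div_lt_div_iff_of_pos_right hP).mpr key
  linarith


private lemma global_sol (t₂ a : ℝ) (F : ℝ → ℝ) (hF : Continuous F)
    (w W : ℝ → ℝ)
    (hw0 : ∀ x, t₂ ≤ x → 0 ≤ w x)
    (hwd : ∀ x, t₂ ≤ x → HasDerivWithinAt w (W x) (Ici t₂) x)
    (hsub : ∀ x, t₂ ≤ x → W x < -((w x)^2 + F x))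
    (ha : w t₂ ≤ a) :
    ∃ g : ℝ → ℝ, g t₂ = a ∧ (∀ x, t₂ ≤ x → w x ≤ g x) ∧
      ∀ x, t₂ ≤ x → HasDerivWithinAt g (-((g x)^2 + F x)) (Ici t₂) x := by
  have ha0 : 0 ≤ a := le_trans (hw0 t₂ le_rfl) ha
  -- Step A : solutions on every compact interval [t₂, T]
  have stepA : ∀ T, t₂ ≤ T → ∃ h M : _, h t₂ = a ∧
      (∀ x ∈ Icc t₂ T, HasDerivWithinAt h (-((h x)^2 + F x)) (Icc t₂ T) x) ∧
      ∀ x ∈ Icc t₂ T, w x ≤ h x ∧ h x ≤ M := by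
    intro T hT
    obtain ⟨K₀, hK₀⟩ := (isCompact_Icc (a := t₂) (b := T)).exists_bound_of_continuousOn
      hF.continuousOn
    set K := max K₀ 0 with hKdef
    have hK : ∀ x ∈ Icc t₂ T, |F x| ≤ K := fun x hx => le_trans (hK₀ x hx) (le_max_left _ _)
    have hK0 : (0:ℝ) ≤ K := le_max_right _ _
    set M := max a (K + 1) with hMdef
    have hM1 : (1:ℝ) ≤ M := le_trans (by linarith) (le_max_right _ _)
    have hMa : a ≤ M := le_max_left _ _
    have hMK : K + 1 ≤ M := le_max_right _ _
    set Cb := (M + 1)^2 + K with hCbdef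
    have hCb : 0 < Cb := by nlinarith
    set δ := 1 / Cb with hδdef
    have hδ : 0 < δ := by positivity
    set Tn : ℕ → ℝ := fun n => min (t₂ + n * δ) T with hTndef
    have hTn_lb : ∀ n, t₂ ≤ Tn n := fun n =>
      le_min (le_add_of_nonneg_right (by positivity)) hT
    have hTn_ub : ∀ n, Tn n ≤ T := fun n => min_le_right _ _
    have hTn_mono : ∀ n, Tn n ≤ Tn (n+1) := by
      intro n
      apply min_le_min _ le_rfl
      push_cast
      nlinarith
    have hTn_step : ∀ n, Tn (n+1) ≤ Tn n + δ := by
      intro n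
      have : Tn (n+1) ≤ min (t₂ + n * δ + δ) (T + δ) := by
        apply min_le_min _ (by linarith)
        push_cast; linarith
      rwa [min_add_add_right] at this
    have main : ∀ n : ℕ, ∃ h : ℝ → ℝ, h t₂ = a ∧
        (∀ x ∈ Icc t₂ (Tn n), HasDerivWithinAt h (-((h x)^2 + F x)) (Icc t₂ (Tn n)) x) ∧
        ∀ x ∈ Icc t₂ (Tn n), w x ≤ h x ∧ h x ≤ M := by
      intro n
      induction n with
      | zero =>
        have hTn0 : Tn 0 = t₂ := by
          simp only [hTndef]
          push_cast
          rw [zero_mul, add_zero]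
          exact min_eq_left hT
        refine ⟨fun _ => a, rfl, ?_, ?_⟩
        · intro x hx
          rw [hTn0] at hx ⊢
          rw [Icc_self] at hx ⊢
          obtain rfl : x = t₂ := hx
          exact hdw_singleton _ _ _
        · intro x hx
          rw [hTn0, Icc_self] at hx
          obtain rfl : x = t₂ := hx
          exact ⟨ha, hMa⟩
      | succ n ih =>
        obtain ⟨h, hht₂, hhd, hhb⟩ := ih
        rcases le_or_gt (Tn (n+1)) (Tn n) with hle | hlt
        · have heq : Tn (n+1) = Tn n := le_antisymm hle (hTn_mono n)
          rw [heq]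
          exact ⟨h, hht₂, hhd, hhb⟩
        · set τ := Tn n with hτdef
          set τ' := Tn (n+1) with hτ'def
          have hτ2 : t₂ ≤ τ := hTn_lb n
          have hττ' : τ ≤ τ' := le_of_lt hlt
          have hτ'T : τ' ≤ T := hTn_ub (n+1)
          have hτ'δ : τ' ≤ τ + δ := hTn_step n
          set x₀ := h τ with hx₀def
          have hτmem : τ ∈ Icc t₂ τ := ⟨hτ2, le_rfl⟩
          have hx₀0 : 0 ≤ x₀ := le_trans (hw0 τ hτ2) (hhb τ hτmem).1
          have hx₀M : x₀ ≤ M := (hhb τ hτmem).2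
          -- Picard–Lindelöf on [τ, τ']
          have habs : ∀ y : ℝ, y ∈ Metric.closedBall x₀ 1 → |y| ≤ M + 1 := by
            intro y hy
            have h1 : |y - x₀| ≤ 1 := by rwa [Metric.mem_closedBall, Real.dist_eq] at hy
            obtain ⟨h2, h3⟩ := abs_le.mp h1
            exact abs_le.mpr ⟨by linarith, by linarith⟩
          have hpl : IsPicardLindelof (fun t y => -(y^2 + F t)) (tmin := τ) (tmax := τ')
              ⟨τ, le_rfl, hττ'⟩ x₀ 1 0 (Real.toNNReal Cb) (Real.toNNReal (2*(M+1))) := by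
            refine ⟨?_, ?_, ?_, ?_⟩
            · intro t _
              apply LipschitzOnWith.of_dist_le_mul
              intro y hy z hz
              rw [Real.dist_eq, Real.dist_eq, Real.coe_toNNReal _ (by positivity)]
              have e : -(y^2 + F t) - -(z^2 + F t) = (z + y) * (z - y) := by ring
              rw [e, abs_mul, abs_sub_comm z y]
              have hza : |z + y| ≤ 2*(M+1) := by
                have := abs_add_le z y
                have hy' := habs y hy
                have hz' := habs z hz
                linarith
              exact mul_le_mul_of_nonneg_right hza (abs_nonneg _)
            · intro y _
              exact (Continuous.neg (continuous_const.add hF)).continuousOn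
            · intro t ht y hy
              rw [Real.norm_eq_abs, abs_neg, Real.coe_toNNReal _ hCb.le]
              have hFt : |F t| ≤ K := hK t ⟨le_trans hτ2 ht.1, le_trans ht.2 hτ'T⟩
              have hy' := habs y hy
              have hy2 : y^2 ≤ (M+1)^2 := by nlinarith [abs_nonneg y, sq_abs y, neg_abs_le y, le_abs_self y]
              calc |y^2 + F t| ≤ |y^2| + |F t| := abs_add_le _ _
                _ ≤ (M+1)^2 + K := by
                    rw [abs_of_nonneg (sq_nonneg y)]
                    exact add_le_add hy2 hFt
            · rw [Real.coe_toNNReal _ hCb.le, NNReal.coe_one, NNReal.coe_zero, sub_zero]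
              show Cb * max (τ' - τ) (τ - τ) ≤ 1
              have hmax : max (τ' - τ) (τ - τ) = τ' - τ := by
                rw [sub_self]; exact max_eq_left (by linarith)
              rw [hmax]
              calc Cb * (τ' - τ) ≤ Cb * δ := by nlinarith
                _ = 1 := by rw [hδdef]; field_simp
          obtain ⟨h₂, hh₂τ, hh₂d⟩ : ∃ α : ℝ → ℝ, α τ = x₀ ∧ ∀ t ∈ Icc τ τ',
              HasDerivWithinAt α (-((α t)^2 + F t)) (Icc τ τ') t :=
            hpl.exists_eq_forall_mem_Icc_hasDerivWithinAt₀
          -- glue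
          set h₃ : ℝ → ℝ := fun x => if x ≤ τ then h x else h₂ x with hh₃def
          have hEq1 : ∀ x ∈ Icc t₂ τ, h₃ x = h x := fun x hx => if_pos hx.2
          have hEq2 : ∀ x ∈ Icc τ τ', h₃ x = h₂ x := by
            intro x hx
            rcases le_or_gt x τ with hxτ | hxτ
            · have hxe : x = τ := le_antisymm hxτ hx.1
              rw [hxe]
              show (if τ ≤ τ then h τ else h₂ τ) = h₂ τ
              rw [if_pos le_rfl, hh₂τ]
            · exact if_neg (not_le.mpr hxτ)
          have hIccsub1 : Icc t₂ τ ⊆ Icc t₂ τ' := Icc_subset_Icc_right hττ'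
          have hIccsub2 : Icc τ τ' ⊆ Icc t₂ τ' := Icc_subset_Icc_left hτ2
          have hd₃ : ∀ x ∈ Icc t₂ τ',
              HasDerivWithinAt h₃ (-((h₃ x)^2 + F x)) (Icc t₂ τ') x := by
            intro x hx
            rcases lt_trichotomy x τ with hxτ | hxτ | hxτ
            · have hx1 : x ∈ Icc t₂ τ := ⟨hx.1, le_of_lt hxτ⟩
              have hd := (hhd x hx1).congr hEq1 (hEq1 x hx1)
              rw [hEq1 x hx1]
              refine hd.mono_of_mem_nhdsWithin ?_
              refine Filter.mem_of_superset
                (inter_mem_nhdsWithin (Icc t₂ τ') (Iic_mem_nhds hxτ)) ?_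
              exact fun y hy => ⟨hy.1.1, hy.2⟩
            · rw [hxτ]
              have d1 : HasDerivWithinAt h₃ (-((h₃ τ)^2 + F τ)) (Icc t₂ τ) τ := by
                have hd := (hhd τ hτmem).congr hEq1 (hEq1 τ hτmem)
                rw [hEq1 τ hτmem]
                exact hd
              have d2 : HasDerivWithinAt h₃ (-((h₃ τ)^2 + F τ)) (Icc τ τ') τ := by
                have hτm : τ ∈ Icc τ τ' := ⟨le_rfl, hττ'⟩
                have hd := (hh₂d τ hτm).congr hEq2 (hEq2 τ hτm)
                rw [hEq2 τ hτm]
                exact hd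
              have := d1.union d2
              rwa [Icc_union_Icc_eq_Icc hτ2 hττ'] at this
            · have hx2 : x ∈ Icc τ τ' := ⟨le_of_lt hxτ, hx.2⟩
              have hd := (hh₂d x hx2).congr hEq2 (hEq2 x hx2)
              rw [hEq2 x hx2]
              refine hd.mono_of_mem_nhdsWithin ?_
              refine Filter.mem_of_superset
                (inter_mem_nhdsWithin (Icc t₂ τ') (Ioi_mem_nhds hxτ)) ?_
              exact fun y hy => ⟨le_of_lt hy.2, hy.1.2⟩
          have hcont₃ : ContinuousOn h₃ (Icc t₂ τ') :=
            fun x hx => (hd₃ x hx).continuousWithinAt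
          -- lower bound on [τ, τ'] by fencing
          have hwcont : ContinuousOn w (Icc τ τ') := fun x hx =>
            ((hwd x (le_trans hτ2 hx.1)).continuousWithinAt).mono
              (fun y hy => le_trans hτ2 hy.1)
          have hlow' : ∀ ⦃x⦄, x ∈ Icc τ τ' → w x ≤ h₃ x := by
            refine image_le_of_deriv_right_lt_deriv_boundary' (f := w) (f' := W)
              (B := h₃) (B' := fun x => -((h₃ x)^2 + F x)) hwcont ?_ ?_
              (hcont₃.mono hIccsub2) ?_ ?_
            · intro x hx
              exact (hwd x (le_trans hτ2 hx.1)).mono (Ici_subset_Ici.mpr (le_trans hτ2 hx.1))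
            · rw [hEq1 τ hτmem]
              exact (hhb τ hτmem).1
            · intro x hx
              refine (hd₃ x ⟨le_trans hτ2 hx.1, le_of_lt hx.2⟩).mono_of_mem_nhdsWithin ?_
              refine Filter.mem_of_superset
                (inter_mem_nhdsWithin (Ici x) (Iio_mem_nhds hx.2)) ?_
              exact fun y hy => ⟨le_trans (le_trans hτ2 hx.1) hy.1, le_of_lt hy.2⟩
            · intro x hx heq
              have hgoal := hsub x (le_trans hτ2 hx.1)
              rw [heq] at hgoal
              exact hgoal
          -- upper bound by constant fencing
          have hup : ∀ ⦃x⦄, x ∈ Icc t₂ τ' → h₃ x ≤ M := by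
            refine image_le_of_deriv_right_lt_deriv_boundary (f := h₃)
              (f' := fun x => -((h₃ x)^2 + F x)) (B := fun _ => M) (B' := fun _ => 0)
              hcont₃ ?_ ?_ (fun x => hasDerivAt_const x M) ?_
            · intro x hx
              refine (hd₃ x ⟨hx.1, le_of_lt hx.2⟩).mono_of_mem_nhdsWithin ?_
              refine Filter.mem_of_superset
                (inter_mem_nhdsWithin (Ici x) (Iio_mem_nhds hx.2)) ?_
              exact fun y hy => ⟨le_trans hx.1 hy.1, le_of_lt hy.2⟩
            · rw [hEq1 t₂ ⟨le_rfl, hτ2⟩, hht₂]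
              exact hMa
            · intro x hx heq
              have heq' : h₃ x = M := heq
              have hFx : |F x| ≤ K := hK x ⟨hx.1, le_trans (le_of_lt hx.2) hτ'T⟩
              have h5 := abs_le.mp hFx
              have hgoal : -((h₃ x)^2 + F x) < 0 := by rw [heq']; nlinarith
              exact hgoal
          refine ⟨h₃, ?_, hd₃, ?_⟩
          · rw [hEq1 t₂ ⟨le_rfl, hτ2⟩]; exact hht₂
          · intro x hx
            refine ⟨?_, hup hx⟩
            rcases le_or_gt x τ with hxτ | hxτ
            · rw [hEq1 x ⟨hx.1, hxτ⟩]
              exact (hhb x ⟨hx.1, hxτ⟩).1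
            · exact hlow' ⟨le_of_lt hxτ, hx.2⟩
    -- conclude step A from the inductive family
    obtain ⟨n, hn⟩ := exists_nat_ge ((T - t₂) / δ)
    have hTnn : Tn n = T := by
      apply min_eq_right
      rw [div_le_iff₀ hδ] at hn
      linarith
    obtain ⟨h, h1, h2, h3⟩ := main n
    rw [hTnn] at h2 h3
    exact ⟨h, M, h1, h2, h3⟩
  -- Step B: glue the compact-interval solutions into a global one
  have hQ : ∀ T : ℝ, ∃ h : ℝ → ℝ, ∃ M : ℝ, h t₂ = a ∧
      (∀ x ∈ Icc t₂ (max T t₂), HasDerivWithinAt h (-((h x)^2 + F x)) (Icc t₂ (max T t₂)) x) ∧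
      ∀ x ∈ Icc t₂ (max T t₂), w x ≤ h x ∧ h x ≤ M := by
    intro T
    obtain ⟨h, M, h1, h2, h3⟩ := stepA (max T t₂) (le_max_right _ _)
    exact ⟨h, M, h1, h2, h3⟩
  choose sol Mb hsol₂ hsold hsolb using hQ
  have coh : ∀ T T' : ℝ, ∀ x ∈ Icc t₂ (max T t₂),
      x ∈ Icc t₂ (max T' t₂) → sol T x = sol T' x := by
    intro T T' x hx hx'
    set b := min (max T t₂) (max T' t₂) with hbdef
    have hxb : x ∈ Icc t₂ b := ⟨hx.1, le_min hx.2 hx'.2⟩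
    set N := max (Mb T) (Mb T') with hNdef
    have hN0 : 0 ≤ N := by
      have h0 : t₂ ∈ Icc t₂ (max T t₂) := ⟨le_rfl, le_max_right _ _⟩
      have := (hsolb T t₂ h0).2
      have := (hsolb T t₂ h0).1
      have := hw0 t₂ le_rfl
      have := le_max_left (Mb T) (Mb T')
      linarith
    have hlip : ∀ t : ℝ, LipschitzOnWith (Real.toNNReal (2*N))
        (fun y : ℝ => -(y^2 + F t)) (Icc 0 N) := by
      intro t
      apply LipschitzOnWith.of_dist_le_mul
      intro y hy z hz
      rw [Real.dist_eq, Real.dist_eq, Real.coe_toNNReal _ (by positivity)]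
      have e : -(y^2 + F t) - -(z^2 + F t) = (z + y) * (z - y) := by ring
      rw [e, abs_mul, abs_sub_comm z y]
      have hza : |z + y| ≤ 2*N := by
        rw [abs_of_nonneg (by linarith [hy.1, hz.1] : (0:ℝ) ≤ z + y)]
        linarith [hy.2, hz.2]
      exact mul_le_mul_of_nonneg_right hza (abs_nonneg _)
    have key : ∀ S : ℝ, b ≤ max S t₂ →
        (ContinuousOn (sol S) (Icc t₂ b) ∧
         (∀ t ∈ Ico t₂ b, HasDerivWithinAt (sol S) (-((sol S t)^2 + F t)) (Ici t) t)) := by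
      intro S hS
      constructor
      · intro y hy
        exact ((hsold S y ⟨hy.1, le_trans hy.2 hS⟩).continuousWithinAt).mono
          (Icc_subset_Icc_right hS)
      · intro t ht
        refine (hsold S t ⟨ht.1, le_trans (le_of_lt ht.2) hS⟩).mono_of_mem_nhdsWithin ?_
        refine Filter.mem_of_superset
          (inter_mem_nhdsWithin (Ici t) (Iio_mem_nhds (lt_of_lt_of_le ht.2 hS))) ?_
        exact fun y hy => ⟨le_trans ht.1 hy.1, le_of_lt hy.2⟩
    have hsmem : ∀ S : ℝ, b ≤ max S t₂ → (N = max (Mb T) (Mb T') → Mb S ≤ N) →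
        ∀ t ∈ Ico t₂ b, sol S t ∈ Icc (0:ℝ) N := by
      intro S hS hMS t ht
      have htm : t ∈ Icc t₂ (max S t₂) := ⟨ht.1, le_trans (le_of_lt ht.2) hS⟩
      refine ⟨le_trans (hw0 t ht.1) (hsolb S t htm).1, le_trans (hsolb S t htm).2 (hMS hNdef)⟩
    have hbT : b ≤ max T t₂ := min_le_left _ _
    have hbT' : b ≤ max T' t₂ := min_le_right _ _
    exact ODE_solution_unique_of_mem_Icc_right (v := fun t y => -(y^2 + F t))
      (s := fun _ => Icc (0:ℝ) N) (fun t _ => hlip t)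
      (key T hbT).1 (key T hbT).2
      (hsmem T hbT (fun _ => le_max_left _ _))
      (key T' hbT').1 (key T' hbT').2
      (hsmem T' hbT' (fun _ => le_max_right _ _))
      (by rw [hsol₂ T, hsol₂ T']) hxb
  refine ⟨fun x => sol x x, ?_, ?_, ?_⟩
  · exact hsol₂ t₂
  · intro x hx
    exact (hsolb x x ⟨hx, le_max_left _ _⟩).1
  · intro x hx
    have hxm : x ∈ Icc t₂ (max (x+1) t₂) := ⟨hx, le_trans (by linarith) (le_max_left _ _)⟩
    have hmem : Icc t₂ (max (x+1) t₂) ∈ 𝓝[Ici t₂] x := by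
      refine Filter.mem_of_superset
        (inter_mem_nhdsWithin (Ici t₂)
          (Iio_mem_nhds (lt_of_lt_of_le (by linarith) (le_max_left (x+1) t₂)))) ?_
      exact fun y hy => ⟨hy.1, le_of_lt hy.2⟩
    have hder := (hsold (x+1) x hxm).mono_of_mem_nhdsWithin hmem
    have heqx : ∀ y ∈ Icc t₂ (max (x+1) t₂), sol y y = sol (x+1) y := by
      intro y hy
      exact coh y (x+1) y ⟨hy.1, le_max_left _ _⟩ hy
    have hgx : sol x x = sol (x+1) x := heqx x hxm
    show HasDerivWithinAt (fun y => sol y y) (-((sol x x)^2 + F x)) (Ici t₂) x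
    rw [hgx]
    exact hder.congr_of_eventuallyEq
      (Filter.eventuallyEq_of_mem hmem heqx) hgx


/-- `f` is recursively integrable on `[t₀, ∞)`: for some `t₁ ≥ t₀`, the differential
equation `-g′(x) = g(x)² + f(x)` has a nonnegative solution `g` on `[t₁, ∞)`. -/
def RecInt (t₀ : ℝ) (f : ℝ → ℝ) : Prop :=
  ∃ t₁ : ℝ, t₀ ≤ t₁ ∧ ∃ g : ℝ → ℝ, (∀ x, t₁ ≤ x → 0 ≤ g x) ∧
    ∀ x, t₁ ≤ x → HasDerivWithinAt g (-(g x ^ 2 + f x)) (Set.Ici t₁) x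

/-- Ignorability of `x ↦ x^{-(2+ε)}`: perturbing a recursive antiderivative `g₁` of `f₁`
(with `x g₁(x) → 1/2`) by `C/x^{1+ε}` (where `C > 1/ε`) gives a solution of the
differential inequality for `f₁ + x^{-(2+ε)}`, so the latter is recursively integrable. -/
theorem ignorable_perturbation (ε C t₁ : ℝ) (hε : 0 < ε) (hC : 1 / ε < C)
    (f₁ g₁ : ℝ → ℝ) (hf₁ : ContinuousOn f₁ (Set.Ici t₁))
    (hg₁0 : ∀ x, t₁ ≤ x → 0 ≤ g₁ x)
    (hg₁ : ∀ x, t₁ ≤ x → HasDerivWithinAt g₁ (-(g₁ x ^ 2 + f₁ x)) (Set.Ici t₁) x)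
    (hlim : Filter.Tendsto (fun x : ℝ => x * g₁ x) Filter.atTop (nhds (1 / 2))) :
    (∃ t₂ : ℝ, t₁ ≤ t₂ ∧ ∀ x, t₂ ≤ x → ∃ g' : ℝ,
      HasDerivWithinAt (fun y : ℝ => g₁ y + C / y ^ ((1 : ℝ) + ε)) g' (Set.Ici t₂) x ∧
      (g₁ x + C / x ^ ((1 : ℝ) + ε)) ^ 2 + f₁ x + 1 / x ^ ((2 : ℝ) + ε) ≤ -g') ∧
    RecInt t₁ (fun x => f₁ x + 1 / x ^ ((2 : ℝ) + ε)) := by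
  have hC0 : 0 < C := lt_trans (by positivity) hC
  have hm : 0 < C * ε - 1 := by
    have h1 : 1 / ε * ε < C * ε := mul_lt_mul_of_pos_right hC hε
    rw [div_mul_cancel₀ _ hε.ne'] at h1
    linarith
  set m := C * ε - 1 with hmdef
  have h1 : ∀ᶠ x in atTop, x * g₁ x < 1/2 + m/(4*C) := by
    refine hlim.eventually_lt_const ?_
    have : 0 < m/(4*C) := by positivity
    linarith
  have htend : Tendsto (fun x : ℝ => C^2 / x ^ ε) atTop (𝓝 0) := by
    have h := (tendsto_rpow_atTop hε).inv_tendsto_atTop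
    have h2 := h.const_mul (C^2)
    simpa [div_eq_mul_inv] using h2
  have h2 : ∀ᶠ x in atTop, C^2 / x ^ ε < m/4 := htend.eventually_lt_const (by positivity)
  have h3 : ∀ᶠ x in atTop, max t₁ 1 ≤ x := eventually_ge_atTop _
  obtain ⟨N, hN⟩ := eventually_atTop.mp ((h1.and h2).and h3)
  set t₂ := max N (max t₁ 1) with ht₂def
  have ht₁₂ : t₁ ≤ t₂ := le_trans (le_max_left _ _) (le_max_right _ _)
  have hkey : ∀ x, t₂ ≤ x → 1 ≤ x ∧ 2*C*(x * g₁ x) + C^2 / x ^ ε + 1 < C*(1+ε) := by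
    intro x hx
    obtain ⟨⟨hk1, hk2⟩, hk3⟩ := hN x (le_trans (le_max_left _ _) hx)
    have hx1 : (1:ℝ) ≤ x := le_trans (le_max_right _ _) hk3
    refine ⟨hx1, ?_⟩
    have e1 : 2*C*(x*g₁ x) < 2*C*(1/2 + m/(4*C)) :=
      mul_lt_mul_of_pos_left hk1 (by positivity)
    have e2 : 2*C*(1/2 + m/(4*C)) = C + m/2 := by field_simp; ring
    rw [e2] at e1
    have e3 : C*(1+ε) = C + m + 1 := by rw [hmdef]; ring
    linarith
  have hx0 : ∀ x : ℝ, t₂ ≤ x → (0:ℝ) < x :=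
    fun x hx => lt_of_lt_of_le one_pos (hkey x hx).1
  set D : ℝ → ℝ := fun x => -(g₁ x ^ 2 + f₁ x) + -(C * (1+ε) / x ^ ((2:ℝ)+ε)) with hDdef
  have hgder : ∀ x, t₂ ≤ x →
      HasDerivWithinAt (fun y : ℝ => g₁ y + C / y ^ ((1:ℝ)+ε)) (D x) (Ici t₂) x := by
    intro x hx
    have hx0' : 0 < x := hx0 x hx
    have hd2 := hasDerivAt_const_div_rpow C ((1:ℝ)+ε) hx0'
    rw [show (1:ℝ)+ε+1 = (2:ℝ)+ε by ring] at hd2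
    exact ((hg₁ x (le_trans ht₁₂ hx)).mono (Ici_subset_Ici.mpr ht₁₂)).add hd2.hasDerivWithinAt
  have hstrict : ∀ x, t₂ ≤ x →
      (g₁ x + C / x ^ ((1:ℝ)+ε))^2 + (f₁ x + 1 / x ^ ((2:ℝ)+ε)) < -(D x) := by
    intro x hx
    have hx0' : 0 < x := hx0 x hx
    have hu : 0 < x ^ ε := Real.rpow_pos_of_pos hx0' ε
    have e1 : x ^ ((1:ℝ)+ε) = x * x ^ ε := by
      rw [Real.rpow_add hx0', Real.rpow_one]
    have e2 : x ^ ((2:ℝ)+ε) = x^2 * x ^ ε := by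
      rw [Real.rpow_add hx0', show (2:ℝ) = ((2:ℕ):ℝ) by norm_num, Real.rpow_natCast]
    have halg := key_alg (q := f₁ x) hx0' hu (hkey x hx).2
    have hD : -(D x) = (g₁ x ^ 2 + f₁ x) + C*(1+ε) / x ^ ((2:ℝ)+ε) := by
      simp only [hDdef]; ring
    rw [hD, e1, e2]
    linarith
  constructor
  · refine ⟨t₂, ht₁₂, fun x hx => ⟨D x, hgder x hx, ?_⟩⟩
    have := hstrict x hx
    linarith
  · -- recursive integrability of the perturbed function
    have ht₂1 : (1:ℝ) ≤ t₂ := le_trans (le_max_right t₁ 1) (le_max_right _ _)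
    have hmaxpos : ∀ x : ℝ, 0 < max x t₂ :=
      fun x => lt_of_lt_of_le one_pos (le_trans ht₂1 (le_max_right _ _))
    set F : ℝ → ℝ := fun x => f₁ (max x t₂) + 1 / (max x t₂) ^ ((2:ℝ)+ε) with hFdef
    have hFcont : Continuous F := by
      have hmc : Continuous (fun x : ℝ => max x t₂) := continuous_id.max continuous_const
      have hc1 : Continuous (fun x : ℝ => f₁ (max x t₂)) :=
        hf₁.comp_continuous hmc (fun x => le_trans ht₁₂ (le_max_right _ _))
      have hc2 : Continuous (fun x : ℝ => (max x t₂) ^ ((2:ℝ)+ε)) :=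
        hmc.rpow_const (fun x => Or.inl (hmaxpos x).ne')
      exact hc1.add (continuous_const.div hc2
        (fun x => (Real.rpow_pos_of_pos (hmaxpos x) _).ne'))
    have hFeq : ∀ x, t₂ ≤ x → F x = f₁ x + 1 / x ^ ((2:ℝ)+ε) := by
      intro x hx
      simp only [hFdef, max_eq_left hx]
    obtain ⟨g, hga, hglow, hgd⟩ := global_sol t₂ (g₁ t₂ + C / t₂ ^ ((1:ℝ)+ε)) F hFcont
      (fun y => g₁ y + C / y ^ ((1:ℝ)+ε)) D
      (fun x hx => add_nonneg (hg₁0 x (le_trans ht₁₂ hx))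
        (le_of_lt (div_pos hC0 (Real.rpow_pos_of_pos (hx0 x hx) _))))
      hgder
      (fun x hx => by
        rw [hFeq x hx]
        have := hstrict x hx
        linarith)
      le_rfl
    refine ⟨t₂, ht₁₂, g, ?_, ?_⟩
    · intro x hx
      refine le_trans ?_ (hglow x hx)
      exact add_nonneg (hg₁0 x (le_trans ht₁₂ hx))
        (le_of_lt (div_pos hC0 (Real.rpow_pos_of_pos (hx0 x hx) _)))
    · intro x hx
      have hd := hgd x hx
      rw [hFeq x hx] at hd
      exact hd
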